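/- Let G be an instance of the MST problem under explorable uncertainty with unique lower and upper limit trees satisfying T_L = T_U, and let G' be the instance obtained from G by querying a set Q of edges, with unique limit trees T_L' = T_U'. Then every edge e in the symmetric difference T_L Δ T_L' = (T_L ∖ T_L') ∪ (T_L' ∖ T_L) satisfies e ∈ Q. -/

import Mathlib

/-!
Common framework: the minimum spanning tree problem under explorable
uncertainty with (untrusted) predictions.
-/

open scoped BigOperators
open scoped Classical

noncomputable section

/-- An instance of the MST problem under explorable uncertainty with predictions:
a connected (multi)graph whose edges carry uncertainty intervals (open `(L,U)` for
non-trivial edges, i.e. `L < U`, and the singleton `{L}` for trivial edges, i.e. `L = U`)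
together with predicted values `pw e` lying in the intervals. -/
structure UncGraph where
  V : Type
  E : Type
  fintV : Fintype V
  fintE : Fintype E
  decV : DecidableEq V
  decE : DecidableEq E
  ends : E → Sym2 V
  conn : ∀ u v : V, Relation.ReflTransGen (fun a b => ∃ e : E, ends e = s(a, b)) u v
  L : E → ℝ
  U : E → ℝ
  LU : ∀ e, L e ≤ U e
  pw : E → ℝ
  pw_mem : ∀ e, (L e = U e ∧ pw e = L e) ∨ (L e < pw e ∧ pw e < U e)

attribute [instance] UncGraph.fintV UncGraph.fintE UncGraph.decV UncGraph.decE

namespace UncGraph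

variable (G : UncGraph)

/-- The uncertainty interval of an edge: the open interval `(L e, U e)` for a
non-trivial edge, the singleton `{L e}` for a trivial edge (`L e = U e`). -/
def I (e : G.E) : Set ℝ :=
  {x | (G.L e = G.U e ∧ x = G.L e) ∨ (G.L e < x ∧ x < G.U e)}

/-- A trivial edge: its interval is a singleton. -/
def TrivialEdge (e : G.E) : Prop := G.L e = G.U e

/-- A non-trivial edge: its interval is a nonempty open interval. -/
def NontrivialEdge (e : G.E) : Prop := G.L e < G.U e

/-- `w` is a valid realization of true edge weights. -/
def Valid (w : G.E → ℝ) : Prop := ∀ e, w e ∈ G.I e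

/-- Connectivity of two vertices using only edges from `S`. -/
def ConnectsVia (S : Finset G.E) (u v : G.V) : Prop :=
  Relation.ReflTransGen (fun a b => ∃ e ∈ S, G.ends e = s(a, b)) u v

/-- `S` is a spanning tree: it connects all vertices and has `|V| - 1` edges. -/
def IsSpanningTree (S : Finset G.E) : Prop :=
  (∀ u v : G.V, G.ConnectsVia S u v) ∧ S.card + 1 = Fintype.card G.V

/-- `T` is a minimum spanning tree with respect to the weight function `wf`. -/
def IsMST (wf : G.E → ℝ) (T : Finset G.E) : Prop :=
  G.IsSpanningTree T ∧ ∀ T', G.IsSpanningTree T' → ∑ e ∈ T, wf e ≤ ∑ e ∈ T', wf e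

/-- `wf` agrees with the true values `w` on the queried set `Q` and lies in the
uncertainty intervals elsewhere. -/
def Compatible (w : G.E → ℝ) (Q : Finset G.E) (wf : G.E → ℝ) : Prop :=
  (∀ e ∈ Q, wf e = w e) ∧ ∀ e, wf e ∈ G.I e

/-- The query set `Q` verifies `T`: `T` is an MST for every weight function
compatible with the revealed values. -/
def Verifies (w : G.E → ℝ) (Q T : Finset G.E) : Prop :=
  ∀ wf, G.Compatible w Q wf → G.IsMST wf T

/-- `Q` is a feasible query set for true values `w`. -/
def Feasible (w : G.E → ℝ) (Q : Finset G.E) : Prop :=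
  ∃ T, G.Verifies w Q T

/-- The minimum cardinality of a feasible query set. -/
def optCost (w : G.E → ℝ) : ℕ :=
  sInf {n | ∃ Q, G.Feasible w Q ∧ Q.card = n}

/-- `Q` is an optimal (minimum-cardinality feasible) query set. -/
def IsOptimal (w : G.E → ℝ) (Q : Finset G.E) : Prop :=
  G.Feasible w Q ∧ ∀ Q', G.Feasible w Q' → Q.card ≤ Q'.card

/-- An edge is mandatory if it belongs to every feasible query set. -/
def Mandatory (w : G.E → ℝ) (e : G.E) : Prop :=
  ∀ Q, G.Feasible w Q → e ∈ Q

/-- A witness set intersects every feasible query set. -/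
def IsWitnessSet (w : G.E → ℝ) (W : Finset G.E) : Prop :=
  ∀ Q, G.Feasible w Q → ∃ e ∈ W, e ∈ Q

/-- An edge is prediction mandatory if it is mandatory under the assumption that
all queries return the predicted values. -/
def PredMandatory (e : G.E) : Prop := G.Mandatory G.pw e

/-- An instance is prediction mandatory free if it has no prediction mandatory edge. -/
def PredMandatoryFree : Prop := ∀ e, ¬ G.PredMandatory e

/-- Hop-distance indicator `k_{e'}(e)`: `0` if the prediction `p e` has the same
relation to the interval `I e'` as the true value `w e` (both `≤ L e'`, both
`≥ U e'`, or both strictly inside), and `1` otherwise. -/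
def kErr (p w : G.E → ℝ) (e e' : G.E) : ℕ :=
  if (p e ≤ G.L e' ∧ w e ≤ G.L e') ∨ (G.U e' ≤ p e ∧ G.U e' ≤ w e) ∨
      (G.L e' < p e ∧ p e < G.U e' ∧ G.L e' < w e ∧ w e < G.U e')
  then 0 else 1

/-- `h→(e) = Σ_{e' ≠ e} k_{e'}(e)`. -/
def hright (p w : G.E → ℝ) (e : G.E) : ℕ :=
  ∑ e' ∈ Finset.univ.erase e, G.kErr p w e e'

/-- `h←(e) = Σ_{e' ≠ e} k_e(e')`. -/
def hleft (p w : G.E → ℝ) (e : G.E) : ℕ :=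
  ∑ e' ∈ Finset.univ.erase e, G.kErr p w e' e

/-- `h→(E') = Σ_{e ∈ E'} h→(e)`. -/
def hrightSum (p w : G.E → ℝ) (S : Finset G.E) : ℕ := ∑ e ∈ S, G.hright p w e

/-- `h←(E') = Σ_{e ∈ E'} h←(e)`. -/
def hleftSum (p w : G.E → ℝ) (S : Finset G.E) : ℕ := ∑ e ∈ S, G.hleft p w e

/-- The hop distance of prediction `p` for realization `w`. -/
def hopDist (p w : G.E → ℝ) : ℕ := ∑ e, G.hright p w e

/-- The hop distance `k_h` of the instance's predictions for realization `w`. -/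
def khop (w : G.E → ℝ) : ℕ := G.hopDist G.pw w

/-- Lower-limit weights `w^L`: `L e + ε` for non-trivial edges, the known value
for trivial edges. -/
def lowerWeight (ε : ℝ) (e : G.E) : ℝ := if G.L e = G.U e then G.L e else G.L e + ε

/-- Upper-limit weights `w^U`: `U e - ε` for non-trivial edges, the known value
for trivial edges. -/
def upperWeight (ε : ℝ) (e : G.E) : ℝ := if G.L e = G.U e then G.L e else G.U e - ε

/-- `T` is a lower limit tree: an MST for `w^L` for all sufficiently small `ε > 0`. -/
def IsLowerLimitTree (T : Finset G.E) : Prop :=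
  ∃ ε₀ > (0 : ℝ), ∀ ε : ℝ, 0 < ε → ε < ε₀ → G.IsMST (G.lowerWeight ε) T

/-- `T` is an upper limit tree: an MST for `w^U` for all sufficiently small `ε > 0`. -/
def IsUpperLimitTree (T : Finset G.E) : Prop :=
  ∃ ε₀ > (0 : ℝ), ∀ ε : ℝ, 0 < ε → ε < ε₀ → G.IsMST (G.upperWeight ε) T

/-- `T` is simultaneously the unique lower limit tree and the unique upper
limit tree (`T_L = T_U`, both unique). -/
def UniqueLimitTrees (T : Finset G.E) : Prop :=
  G.IsLowerLimitTree T ∧ G.IsUpperLimitTree T ∧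
  (∀ T', G.IsLowerLimitTree T' → T' = T) ∧
  (∀ T', G.IsUpperLimitTree T' → T' = T)

/-- Number of edge-ends of `S` incident to `v` (loops count twice). -/
def incCount (S : Finset G.E) (v : G.V) : ℕ :=
  ∑ e ∈ S, (if G.ends e = s(v, v) then 2 else if v ∈ G.ends e then 1 else 0)

/-- `S` forms a single cycle: nonempty, every vertex has degree `0` or `2`,
and the support is connected. -/
def IsCycle (S : Finset G.E) : Prop :=
  S.Nonempty ∧ (∀ v, G.incCount S v = 0 ∨ G.incCount S v = 2) ∧
  ∀ u v, G.incCount S u ≠ 0 → G.incCount S v ≠ 0 → G.ConnectsVia S u v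

/-- `C` is the cycle closed by adding the edge `f` to the tree `T`. -/
def IsCycleOf (T : Finset G.E) (f : G.E) (C : Finset G.E) : Prop :=
  G.IsCycle C ∧ f ∈ C ∧ C ⊆ insert f T

/-- `e'` lies in the cut `X_e` between the two components of `T \ {e}`. -/
def InCut (T : Finset G.E) (e e' : G.E) : Prop :=
  ∀ u v : G.V, G.ends e' = s(u, v) → ¬ G.ConnectsVia (T.erase e) u v

/-- `S` is a path between the (distinct) vertices `a` and `b`. -/
def IsPathBetween (S : Finset G.E) (a b : G.V) : Prop :=
  a ≠ b ∧ G.incCount S a = 1 ∧ G.incCount S b = 1 ∧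
  (∀ v, v ≠ a → v ≠ b → G.incCount S v = 0 ∨ G.incCount S v = 2) ∧
  ∀ v, G.incCount S v ≠ 0 → G.ConnectsVia S a v

/-- `{f, l}` is an edge of the vertex cover instance `Ḡ` (w.r.t. the tree `T`):
`f ∉ T`, `l ≠ f` lies on the cycle closed by `f`, both are non-trivial, and
their intervals intersect. -/
def VCEdge (T : Finset G.E) (f l : G.E) : Prop :=
  f ∉ T ∧ l ≠ f ∧ G.NontrivialEdge f ∧ G.NontrivialEdge l ∧
  (∃ C, G.IsCycleOf T f C ∧ l ∈ C) ∧ (G.I f ∩ G.I l).Nonempty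

/-- Adjacency in the vertex cover instance `Ḡ` (symmetrized). -/
def VCAdj (T : Finset G.E) (a b : G.E) : Prop := G.VCEdge T a b ∨ G.VCEdge T b a

/-- `S` is a vertex cover of the vertex cover instance `Ḡ`. -/
def IsVCCover (T S : Finset G.E) : Prop :=
  ∀ a b, G.VCAdj T a b → a ∈ S ∨ b ∈ S

/-- `S` is a minimum vertex cover of the vertex cover instance `Ḡ`. -/
def IsMinVC (T S : Finset G.E) : Prop :=
  G.IsVCCover T S ∧ ∀ S', G.IsVCCover T S' → S.card ≤ S'.card

/-- Edge `e` does not occur in the instance anymore: independently of the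
remaining uncertainty it can be deleted (some MST avoids it, for every
realization) or contracted (some MST contains it, for every realization). -/
def Removable (e : G.E) : Prop :=
  (∀ wf : G.E → ℝ, (∀ e', wf e' ∈ G.I e') → ∃ T, G.IsMST wf T ∧ e ∉ T) ∨
  (∀ wf : G.E → ℝ, (∀ e', wf e' ∈ G.I e') → ∃ T, G.IsMST wf T ∧ e ∈ T)

end UncGraph

/-- The instance obtained from `G` by querying the edges of `Q` under true
values `w`: the intervals of queried edges collapse to the revealed values. -/
def UncGraph.restrict (G : UncGraph) (w : G.E → ℝ) (Q : Finset G.E) : UncGraph where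
  V := G.V
  E := G.E
  fintV := G.fintV
  fintE := G.fintE
  decV := G.decV
  decE := G.decE
  ends := G.ends
  conn := G.conn
  L := fun e => if e ∈ Q then w e else G.L e
  U := fun e => if e ∈ Q then w e else G.U e
  LU := fun e => by by_cases h : e ∈ Q <;> simp [h, G.LU e]
  pw := fun e => if e ∈ Q then w e else G.pw e
  pw_mem := fun e => by
    by_cases h : e ∈ Q
    · simp [h]
    · simpa [h] using G.pw_mem e

/-- A deterministic adaptive query algorithm: given the instance and the set of
already queried edges together with the revealed values, it either picks the next
edge to query or stops (`none`).  The lawfulness condition states that the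
decision may only depend on the revealed values of already queried edges. -/
structure Algorithm where
  next : ∀ G : UncGraph, Finset G.E → (G.E → ℝ) → Option G.E
  lawful : ∀ (G : UncGraph) (Q : Finset G.E) (w w' : G.E → ℝ),
    (∀ e ∈ Q, w e = w' e) → next G Q w = next G Q w'

namespace Algorithm

/-- The set of edges queried by `A` after `n` steps, on instance `G` with true
values `w`; the algorithm stops as soon as the queried set is feasible. -/
def runQueries (A : Algorithm) (G : UncGraph) (w : G.E → ℝ) : ℕ → Finset G.E
  | 0 => ∅
  | n + 1 =>
    let Q := A.runQueries G w n
    if G.Feasible w Q then Q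
    else
      match A.next G Q w with
      | some e => insert e Q
      | none => Q

/-- The final query set of the run of `A`. -/
def finalQueries (A : Algorithm) (G : UncGraph) (w : G.E → ℝ) : Finset G.E :=
  A.runQueries G w (Fintype.card G.E + 1)

/-- The number of queries made by `A` on instance `G` with true values `w`. -/
def algCost (A : Algorithm) (G : UncGraph) (w : G.E → ℝ) : ℕ :=
  (A.finalQueries G w).card

/-- `A` solves every instance: it always ends with a feasible query set. -/
def Solves (A : Algorithm) : Prop :=
  ∀ (G : UncGraph) (w : G.E → ℝ), G.Valid w → G.Feasible w (A.finalQueries G w)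

/-- `A` is `α`-consistent: on instances with correct predictions it makes at
most `α · |OPT|` queries. -/
def Consistent (A : Algorithm) (α : ℝ) : Prop :=
  ∀ G : UncGraph, (A.algCost G G.pw : ℝ) ≤ α * (G.optCost G.pw : ℝ)

/-- `A` is `β`-robust: it makes at most `β · |OPT|` queries on every instance. -/
def Robust (A : Algorithm) (β : ℝ) : Prop :=
  ∀ (G : UncGraph) (w : G.E → ℝ), G.Valid w → (A.algCost G w : ℝ) ≤ β * (G.optCost w : ℝ)

/-- Run of a preprocessing algorithm: it stops exactly when `next` returns
`none` (rather than when the queried set is feasible). -/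
def runPre (A : Algorithm) (G : UncGraph) (w : G.E → ℝ) : ℕ → Finset G.E
  | 0 => ∅
  | n + 1 =>
    let Q := A.runPre G w n
    match A.next G Q w with
    | some e => insert e Q
    | none => Q

/-- The final query set of a preprocessing run of `A`. -/
def preQueries (A : Algorithm) (G : UncGraph) (w : G.E → ℝ) : Finset G.E :=
  A.runPre G w (Fintype.card G.E + 1)

end Algorithm

/-! ### Auxiliary development for Statement 8 -/

namespace UncGraph

variable {G : UncGraph}

lemma connectsVia_step {S : Finset G.E} {e : G.E} (he : e ∈ S) {x y : G.V}
    (hd : G.ends e = s(x, y)) : G.ConnectsVia S x y :=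
  Relation.ReflTransGen.single ⟨e, he, hd⟩

lemma connectsVia_symm {S : Finset G.E} {u v : G.V}
    (h : G.ConnectsVia S u v) : G.ConnectsVia S v u := by
  induction h with
  | refl => exact .refl
  | tail _ hstep ih =>
    obtain ⟨e, he, hd⟩ := hstep
    exact Relation.ReflTransGen.trans
      (connectsVia_step he (by rw [hd, Sym2.eq_swap])) ih

lemma connectsVia_mono {S S' : Finset G.E} (hss : S ⊆ S') {u v : G.V}
    (h : G.ConnectsVia S u v) : G.ConnectsVia S' u v :=
  Relation.ReflTransGen.mono (r := fun a b => ∃ e ∈ S, G.ends e = s(a, b))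
    (p := fun a b => ∃ e ∈ S', G.ends e = s(a, b)) (fun a b hab => by
    obtain ⟨e, he, hd⟩ := hab; exact ⟨e, hss he, hd⟩) u v h

lemma connectsVia_of_insert {S : Finset G.E} {e : G.E} {x y : G.V}
    (hd : G.ends e = s(x, y)) (hxy : G.ConnectsVia S x y) {u v : G.V}
    (h : G.ConnectsVia (insert e S) u v) : G.ConnectsVia S u v := by
  induction h with
  | refl => exact .refl
  | tail _ hstep ih =>
    obtain ⟨e', he', hd'⟩ := hstep
    rcases Finset.mem_insert.mp he' with rfl | he'
    · rw [hd] at hd'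
      rcases Sym2.eq_iff.mp hd' with ⟨h1, h2⟩ | ⟨h1, h2⟩
      · exact ih.trans (h1 ▸ h2 ▸ hxy)
      · exact ih.trans (h1 ▸ h2 ▸ connectsVia_symm hxy)
    · exact ih.trans (connectsVia_step he' hd')

/-- `n`-step connectivity. -/
def stepN (G : UncGraph) (S : Finset G.E) : ℕ → G.V → G.V → Prop
  | 0, u, v => u = v
  | n + 1, u, v => ∃ x, (∃ e ∈ S, G.ends e = s(u, x)) ∧ stepN G S n x v

lemma connectsVia_iff_stepN {S : Finset G.E} {u v : G.V} :
    G.ConnectsVia S u v ↔ ∃ n, G.stepN S n u v := by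
  constructor
  · intro h
    induction h using Relation.ReflTransGen.head_induction_on with
    | refl => exact ⟨0, rfl⟩
    | head hstep _ ih =>
      obtain ⟨n, hn⟩ := ih
      obtain ⟨e, he, hd⟩ := hstep
      exact ⟨n + 1, _, ⟨e, he, hd⟩, hn⟩
  · rintro ⟨n, hn⟩
    induction n generalizing u with
    | zero => exact hn ▸ .refl
    | succ n ih =>
      obtain ⟨x, hs, hx⟩ := hn
      exact Relation.ReflTransGen.head hs (ih hx)

lemma card_V_le_of_connects (S : Finset G.E) (hS : ∀ u v : G.V, G.ConnectsVia S u v) :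
    Fintype.card G.V ≤ S.card + 1 := by
  by_cases hV : Fintype.card G.V ≤ 1
  · omega
  push_neg at hV
  obtain ⟨r⟩ : Nonempty G.V := Fintype.card_pos_iff.mp (by omega)
  have hex : ∀ v : G.V, ∃ n, G.stepN S n v r := fun v => connectsVia_iff_stepN.mp (hS v r)
  set d : G.V → ℕ := fun v => Nat.find (hex v) with hd
  have key : ∀ v : G.V, v ≠ r → ∃ e x, e ∈ S ∧ G.ends e = s(v, x) ∧ d x < d v := by
    intro v hv
    have h1 : G.stepN S (d v) v r := Nat.find_spec (hex v)
    have h0 : d v ≠ 0 := by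
      intro h
      rw [h] at h1
      exact hv h1
    obtain ⟨k, hk⟩ := Nat.exists_eq_succ_of_ne_zero h0
    rw [hk] at h1
    obtain ⟨x, ⟨e, he, hde⟩, hst⟩ := h1
    refine ⟨e, x, he, hde, ?_⟩
    have hdx : d x ≤ k := Nat.find_le hst
    omega
  have hEne : Nonempty G.E := by
    obtain ⟨v, hv⟩ := Fintype.exists_ne_of_one_lt_card hV r
    obtain ⟨e, x, he, _, _⟩ := key v hv
    exact ⟨e⟩
  set f : G.V → G.E := fun v =>
    if h : ∃ e x, e ∈ S ∧ G.ends e = s(v, x) ∧ d x < d v then h.choose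
    else Classical.arbitrary G.E with hf
  have hfspec : ∀ v : G.V, v ≠ r →
      f v ∈ S ∧ ∃ x, G.ends (f v) = s(v, x) ∧ d x < d v := by
    intro v hv
    have h := key v hv
    simp only [hf, dif_pos h]
    obtain ⟨x, hx1, hx2, hx3⟩ := h.choose_spec
    exact ⟨hx1, x, hx2, hx3⟩
  have hcard : (Finset.univ.erase r).card ≤ S.card := by
    apply Finset.card_le_card_of_injOn f
    · intro v hv
      exact (hfspec v (Finset.ne_of_mem_erase hv)).1
    · intro v hv u hu hvu
      simp only [Finset.coe_erase, Set.mem_diff, Set.mem_singleton_iff] at hv hu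
      obtain ⟨xv, hxv, hdv⟩ := (hfspec v hv.2).2
      obtain ⟨xu, hxu, hdu⟩ := (hfspec u hu.2).2
      rw [hvu] at hxv
      rw [hxv] at hxu
      rcases Sym2.eq_iff.mp hxu with ⟨h1, _⟩ | ⟨h1, h2⟩
      · exact h1
      · subst h1; subst h2; omega
  have := Finset.card_erase_of_mem (Finset.mem_univ r)
  rw [Finset.card_univ] at this
  omega

lemma bridge {A : Finset G.E} (hA : G.IsSpanningTree A) {e : G.E} (he : e ∈ A)
    {x y : G.V} (hd : G.ends e = s(x, y)) : ¬ G.ConnectsVia (A.erase e) x y := by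
  intro hxy
  have hall : ∀ u v : G.V, G.ConnectsVia (A.erase e) u v := by
    intro u v
    have h := hA.1 u v
    rw [← Finset.insert_erase he] at h
    exact connectsVia_of_insert hd hxy h
  have h1 := card_V_le_of_connects (A.erase e) hall
  have h2 := Finset.card_erase_of_mem he
  have h3 := hA.2
  have h4 : 1 ≤ A.card := Finset.card_pos.mpr ⟨e, he⟩
  omega

lemma two_sides {A : Finset G.E} (hA : ∀ u v : G.V, G.ConnectsVia A u v) {e : G.E}
    {x y : G.V} (hd : G.ends e = s(x, y)) (v : G.V) :
    G.ConnectsVia (A.erase e) x v ∨ G.ConnectsVia (A.erase e) y v := by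
  have h := hA x v
  induction h with
  | refl => exact Or.inl .refl
  | tail _ hstep ih =>
    obtain ⟨e', he', hd'⟩ := hstep
    by_cases hee : e' = e
    · subst hee
      rw [hd] at hd'
      rcases Sym2.eq_iff.mp hd' with ⟨rfl, rfl⟩ | ⟨rfl, rfl⟩
      · exact Or.inr .refl
      · exact Or.inl .refl
    · have hstep' := connectsVia_step (Finset.mem_erase.mpr ⟨hee, he'⟩) hd'
      rcases ih with h | h
      · exact Or.inl (h.trans hstep')
      · exact Or.inr (h.trans hstep')

lemma zmod2_ne {a b : ZMod 2} (h : a ≠ b) : b = a + 1 := by revert h; revert a b; decide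

/-- Symmetric exchange for spanning trees. -/
lemma exchange {A B : Finset G.E} (hA : G.IsSpanningTree A) (hB : G.IsSpanningTree B)
    {e : G.E} (heA : e ∈ A) (heB : e ∉ B) :
    ∃ e', e' ∈ B ∧ e' ∉ A ∧ G.IsSpanningTree (insert e' (A.erase e)) ∧
      G.IsSpanningTree (insert e (B.erase e')) := by
  obtain ⟨x, y, hd⟩ : ∃ x y, G.ends e = s(x, y) :=
    Sym2.ind (f := fun z => G.ends e = z → ∃ x y, G.ends e = s(x, y))
      (fun x y h => ⟨x, y, h⟩) (G.ends e) rfl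
  set P : G.V → Prop := fun v => G.ConnectsVia (A.erase e) x v with hP
  have hPx : P x := .refl
  have hPy : ¬ P y := bridge hA heA hd
  set cross : G.E → Prop := fun e₁ => ∃ u v', G.ends e₁ = s(u, v') ∧ P u ∧ ¬ P v'
    with hcrossdef
  have cross_iff : ∀ e₁ : G.E, ∀ p q : G.V, G.ends e₁ = s(p, q) →
      (cross e₁ ↔ ¬ (P p ↔ P q)) := by
    intro e₁ p q hd1
    constructor
    · rintro ⟨u, v', hd2, hu, hv⟩
      rw [hd1] at hd2
      rcases Sym2.eq_iff.mp hd2.symm with ⟨h1, h2⟩ | ⟨h1, h2⟩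
      · subst h1; subst h2; tauto
      · subst h1; subst h2; tauto
    · intro hne
      by_cases hp : P p
      · exact ⟨p, q, hd1, hp, fun hq => hne ⟨fun _ => hq, fun _ => hp⟩⟩
      · refine ⟨q, p, by rw [hd1, Sym2.eq_swap], ?_, hp⟩
        by_contra hq
        exact hne ⟨fun h => absurd h hp, fun h => absurd h hq⟩
  have key : ∃ e', e' ∈ B ∧ cross e' ∧ ¬ G.ConnectsVia (B.erase e') x y := by
    by_contra hcon
    push_neg at hcon
    set C : Finset G.E := Finset.univ.filter (fun e₁ => e₁ ∈ B ∧ cross e₁) with hC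
    have hmemC : ∀ e₁ : G.E, e₁ ∈ C ↔ e₁ ∈ B ∧ cross e₁ := by
      intro e₁; simp [hC]
    set ψ : G.E → G.V → ZMod 2 := fun e₁ v =>
      if h : cross e₁ then (if G.ConnectsVia (B.erase e₁) h.choose v then 0 else 1) else 0
      with hψ
    set φ : G.V → ZMod 2 := fun v => if P v then 0 else 1 with hφ
    set θ : G.V → ZMod 2 := fun v => φ v + ∑ e₁ ∈ C, ψ e₁ v with hθ
    have ψ_eq : ∀ (e₁ : G.E) (h : cross e₁) (v : G.V),
        ψ e₁ v = if G.ConnectsVia (B.erase e₁) h.choose v then 0 else 1 := by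
      intro e₁ h v
      simp only [hψ, dif_pos h]
    have ψ_spec0 : ∀ (e₁ : G.E) (h : cross e₁) (v : G.V),
        G.ConnectsVia (B.erase e₁) h.choose v → ψ e₁ v = 0 := by
      intro e₁ h v hc
      rw [ψ_eq e₁ h v, if_pos hc]
    have ψ_spec1 : ∀ (e₁ : G.E) (h : cross e₁) (v : G.V),
        ¬ G.ConnectsVia (B.erase e₁) h.choose v → ψ e₁ v = 1 := by
      intro e₁ h v hc
      rw [ψ_eq e₁ h v, if_neg hc]
    have ψ_same : ∀ (e₁ : G.E) (p q : G.V), G.ConnectsVia (B.erase e₁) p q →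
        ψ e₁ p = ψ e₁ q := by
      intro e₁ p q hpq
      by_cases h : cross e₁
      · by_cases hcp : G.ConnectsVia (B.erase e₁) h.choose p
        · rw [ψ_spec0 e₁ h p hcp, ψ_spec0 e₁ h q (hcp.trans hpq)]
        · rw [ψ_spec1 e₁ h p hcp,
            ψ_spec1 e₁ h q (fun hcq => hcp (hcq.trans (connectsVia_symm hpq)))]
      · simp only [hψ, dif_neg h]
    have ψedge : ∀ (e₁ e₂ : G.E), e₂ ∈ B → e₂ ≠ e₁ → ∀ (p q : G.V),
        G.ends e₂ = s(p, q) → ψ e₁ p = ψ e₁ q := by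
      intro e₁ e₂ h2B hne p q hd2
      exact ψ_same e₁ p q (connectsVia_step (Finset.mem_erase.mpr ⟨hne, h2B⟩) hd2)
    -- ψ flips across its own edge
    have ψflip : ∀ e₁ : G.E, e₁ ∈ B → (h : cross e₁) → ∀ p q : G.V,
        G.ends e₁ = s(p, q) → ψ e₁ q = ψ e₁ p + 1 := by
      intro e₁ h1B h p q hd1
      obtain ⟨v', hd2, hu, hv⟩ := h.choose_spec
      have hbr : ¬ G.ConnectsVia (B.erase e₁) h.choose v' := bridge hB h1B hd2
      have hself : G.ConnectsVia (B.erase e₁) h.choose h.choose := .refl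
      rcases Sym2.eq_iff.mp (hd1.symm.trans hd2) with ⟨h1, h2⟩ | ⟨h1, h2⟩
      · rw [h1, h2, ψ_spec0 e₁ h _ hself, ψ_spec1 e₁ h _ hbr]
        decide
      · rw [h1, h2, ψ_spec1 e₁ h _ hbr, ψ_spec0 e₁ h _ hself,
          (by decide : (1 : ZMod 2) + 1 = 0)]
    have edgeinv : ∀ e₁ ∈ B, ∀ p q : G.V, G.ends e₁ = s(p, q) → θ p = θ q := by
      intro e₁ h1B p q hd1
      have φ_spec0 : ∀ v : G.V, P v → φ v = 0 := by
        intro v hv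
        simp only [hφ, if_pos hv]
      have φ_spec1 : ∀ v : G.V, ¬ P v → φ v = 1 := by
        intro v hv
        simp only [hφ, if_neg hv]
      have hφpq : φ q = φ p + (if cross e₁ then 1 else 0) := by
        by_cases hc : cross e₁
        · rw [if_pos hc]
          have hne := (cross_iff e₁ p q hd1).mp hc
          by_cases hp : P p
          · rw [φ_spec0 p hp, φ_spec1 q (fun hq => hne ⟨fun _ => hq, fun _ => hp⟩)]
            decide
          · have hq : P q := by
              by_contra hq
              exact hne ⟨fun h => absurd h hp, fun h => absurd h hq⟩
            rw [φ_spec0 q hq, φ_spec1 p hp]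
            decide
        · rw [if_neg hc, add_zero]
          have hiff : P p ↔ P q := by
            by_contra hne
            exact hc ((cross_iff e₁ p q hd1).mpr hne)
          by_cases hp : P p
          · rw [φ_spec0 p hp, φ_spec0 q (hiff.mp hp)]
          · rw [φ_spec1 p hp, φ_spec1 q (fun hq => hp (hiff.mpr hq))]
      have hsum : (∑ e₂ ∈ C, ψ e₂ q) = (∑ e₂ ∈ C, ψ e₂ p) + (if cross e₁ then 1 else 0) := by
        by_cases hc : e₁ ∈ C
        · have hcr : cross e₁ := ((hmemC e₁).mp hc).2
          rw [← Finset.add_sum_erase _ _ hc, ← Finset.add_sum_erase _ _ hc]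
          rw [ψflip e₁ h1B hcr p q hd1, if_pos hcr]
          have : ∀ e₂ ∈ C.erase e₁, ψ e₂ q = ψ e₂ p := by
            intro e₂ h2
            have h2ne := Finset.ne_of_mem_erase h2
            exact (ψedge e₂ e₁ h1B (fun hh => h2ne hh.symm) p q hd1).symm
          rw [Finset.sum_congr rfl this]
          ring
        · have hnc : ¬ cross e₁ := fun hcr => hc ((hmemC e₁).mpr ⟨h1B, hcr⟩)
          rw [if_neg hnc, add_zero]
          apply Finset.sum_congr rfl
          intro e₂ h2
          have h2B := ((hmemC e₂).mp h2).1
          by_cases h21 : e₂ = e₁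
          · subst h21
            exact absurd ((hmemC e₂).mp h2).2 hnc
          · exact (ψedge e₂ e₁ h1B (fun hh => h21 hh.symm) p q hd1).symm
      have hcc : (if cross e₁ then (1 : ZMod 2) else 0)
          + (if cross e₁ then (1 : ZMod 2) else 0) = 0 := by
        split <;> decide
      simp only [hθ]
      rw [hφpq, hsum, add_add_add_comm, hcc, add_zero]
    have hconst : ∀ u v : G.V, G.ConnectsVia B u v → θ u = θ v := by
      intro u v h
      induction h with
      | refl => rfl
      | tail _ hstep ih =>
        obtain ⟨e₁, h1, h2⟩ := hstep
        exact ih.trans (edgeinv e₁ h1 _ _ h2)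
    have hxyθ : θ x = θ y := hconst x y (hB.1 x y)
    have hψxy : ∀ e₂ ∈ C, ψ e₂ x = ψ e₂ y := by
      intro e₂ h2
      obtain ⟨h2B, h2cr⟩ := (hmemC e₂).mp h2
      exact ψ_same e₂ x y (hcon e₂ h2B h2cr)
    have hsums : (∑ e₂ ∈ C, ψ e₂ x) = ∑ e₂ ∈ C, ψ e₂ y := Finset.sum_congr rfl hψxy
    simp only [hθ] at hxyθ
    rw [hsums] at hxyθ
    have hφxy : φ x = φ y := add_right_cancel hxyθ
    simp only [hφ, if_pos hPx, if_neg hPy] at hφxy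
    exact absurd hφxy (by decide)
  obtain ⟨e', hBe', hcr, hsep⟩ := key
  obtain ⟨u, v', hd', hu, hv'⟩ := hcr
  have hne' : e' ≠ e := fun h => heB (h ▸ hBe')
  have he'A : e' ∉ A := by
    intro hA'
    exact hv' (hu.trans (connectsVia_step (Finset.mem_erase.mpr ⟨hne', hA'⟩) hd'))
  have he'nA : e' ∉ A.erase e := fun h => he'A (Finset.mem_of_mem_erase h)
  have henB : e ∉ B.erase e' := fun h => heB (Finset.mem_of_mem_erase h)
  have hcardA : 1 ≤ A.card := Finset.card_pos.mpr ⟨e, heA⟩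
  have hcardB : 1 ≤ B.card := Finset.card_pos.mpr ⟨e', hBe'⟩
  -- spanning of insert e' (A.erase e)
  have hsub2 : A.erase e ⊆ insert e' (A.erase e) := Finset.subset_insert _ _
  have hxy2 : G.ConnectsVia (insert e' (A.erase e)) x y := by
    have h1 : G.ConnectsVia (insert e' (A.erase e)) x u := connectsVia_mono hsub2 hu
    have h2 : G.ConnectsVia (insert e' (A.erase e)) u v' :=
      connectsVia_step (Finset.mem_insert_self _ _) hd'
    have h3 : G.ConnectsVia (A.erase e) y v' := by
      rcases two_sides hA.1 hd v' with h | h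
      · exact absurd h hv'
      · exact h
    exact (h1.trans h2).trans (connectsVia_mono hsub2 (connectsVia_symm h3))
  have hT2conn : ∀ p q : G.V, G.ConnectsVia (insert e' (A.erase e)) p q := by
    have hside : ∀ p : G.V, G.ConnectsVia (insert e' (A.erase e)) x p := by
      intro p
      rcases two_sides hA.1 hd p with h | h
      · exact connectsVia_mono hsub2 h
      · exact hxy2.trans (connectsVia_mono hsub2 h)
    intro p q
    exact (connectsVia_symm (hside p)).trans (hside q)
  -- spanning of insert e (B.erase e')
  have hsub3 : B.erase e' ⊆ insert e (B.erase e') := Finset.subset_insert _ _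
  have huv3 : G.ConnectsVia (insert e (B.erase e')) u v' := by
    have hx := two_sides hB.1 hd' x
    have hy := two_sides hB.1 hd' y
    have hxystep : G.ConnectsVia (insert e (B.erase e')) x y :=
      connectsVia_step (Finset.mem_insert_self _ _) hd
    rcases hx with hx | hx
    · rcases hy with hy | hy
      · exact absurd ((connectsVia_symm hx).trans hy) hsep
      · exact ((connectsVia_mono hsub3 hx).trans hxystep).trans
          (connectsVia_mono hsub3 (connectsVia_symm hy))
    · rcases hy with hy | hy
      · exact ((connectsVia_mono hsub3 hy).trans (connectsVia_symm hxystep)).trans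
          (connectsVia_mono hsub3 (connectsVia_symm hx))
      · exact absurd ((connectsVia_symm hx).trans hy) hsep
  have hT3conn : ∀ p q : G.V, G.ConnectsVia (insert e (B.erase e')) p q := by
    have hside : ∀ p : G.V, G.ConnectsVia (insert e (B.erase e')) u p := by
      intro p
      rcases two_sides hB.1 hd' p with h | h
      · exact connectsVia_mono hsub3 h
      · exact huv3.trans (connectsVia_mono hsub3 h)
    intro p q
    exact (connectsVia_symm (hside p)).trans (hside q)
  refine ⟨e', hBe', he'A, ⟨hT2conn, ?_⟩, ⟨hT3conn, ?_⟩⟩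
  · rw [Finset.card_insert_of_notMem he'nA, Finset.card_erase_of_mem heA]
    have := hA.2
    omega
  · rw [Finset.card_insert_of_notMem henB, Finset.card_erase_of_mem hBe']
    have := hB.2
    omega

lemma lowerWeight_affine (G : UncGraph) (e : G.E) (a b : ℝ) :
    G.lowerWeight a e + G.lowerWeight b e = 2 * G.lowerWeight ((a + b) / 2) e := by
  unfold lowerWeight
  split <;> ring

lemma upperWeight_affine (G : UncGraph) (e : G.E) (a b : ℝ) :
    G.upperWeight a e + G.upperWeight b e = 2 * G.upperWeight ((a + b) / 2) e := by
  unfold upperWeight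
  split <;> ring

lemma strict_lower (G : UncGraph) {T : Finset G.E} {ε₀ : ℝ}
    (hmst : ∀ ε : ℝ, 0 < ε → ε < ε₀ → G.IsMST (G.lowerWeight ε) T)
    (huniq : ∀ T', G.IsLowerLimitTree T' → T' = T)
    {S : Finset G.E} (hS : G.IsSpanningTree S) (hST : S ≠ T)
    {ε₁ : ℝ} (h1 : 0 < ε₁) (h2 : ε₁ ≤ ε₀) :
    ∑ e ∈ T, G.lowerWeight (ε₁ / 2) e < ∑ e ∈ S, G.lowerWeight (ε₁ / 2) e := by
  have hle := (hmst (ε₁ / 2) (by linarith) (by linarith)).2 S hS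
  rcases lt_or_eq_of_le hle with h | h
  · exact h
  exfalso
  apply hST
  apply huniq
  refine ⟨ε₁, h1, ?_⟩
  intro ε' hε1 hε2
  refine ⟨hS, ?_⟩
  intro S' hS'
  have hsumaff : ∀ R : Finset G.E,
      (∑ e ∈ R, G.lowerWeight ε' e) + (∑ e ∈ R, G.lowerWeight (ε₁ - ε') e)
        = 2 * ∑ e ∈ R, G.lowerWeight (ε₁ / 2) e := by
    intro R
    rw [← Finset.sum_add_distrib, Finset.mul_sum]
    apply Finset.sum_congr rfl
    intro e _
    have := lowerWeight_affine G e ε' (ε₁ - ε')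
    rwa [show (ε' + (ε₁ - ε')) / 2 = ε₁ / 2 by ring] at this
  have hA := (hmst ε' hε1 (by linarith)).2 S hS
  have hB := (hmst (ε₁ - ε') (by linarith) (by linarith)).2 S hS
  have hS1 := hsumaff S
  have hT1 := hsumaff T
  have hkey : ∑ e ∈ S, G.lowerWeight ε' e = ∑ e ∈ T, G.lowerWeight ε' e := by linarith
  rw [hkey]
  exact (hmst ε' hε1 (by linarith)).2 S' hS'

lemma strict_upper (G : UncGraph) {T : Finset G.E} {ε₀ : ℝ}
    (hmst : ∀ ε : ℝ, 0 < ε → ε < ε₀ → G.IsMST (G.upperWeight ε) T)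
    (huniq : ∀ T', G.IsUpperLimitTree T' → T' = T)
    {S : Finset G.E} (hS : G.IsSpanningTree S) (hST : S ≠ T)
    {ε₁ : ℝ} (h1 : 0 < ε₁) (h2 : ε₁ ≤ ε₀) :
    ∑ e ∈ T, G.upperWeight (ε₁ / 2) e < ∑ e ∈ S, G.upperWeight (ε₁ / 2) e := by
  have hle := (hmst (ε₁ / 2) (by linarith) (by linarith)).2 S hS
  rcases lt_or_eq_of_le hle with h | h
  · exact h
  exfalso
  apply hST
  apply huniq
  refine ⟨ε₁, h1, ?_⟩
  intro ε' hε1 hε2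
  refine ⟨hS, ?_⟩
  intro S' hS'
  have hsumaff : ∀ R : Finset G.E,
      (∑ e ∈ R, G.upperWeight ε' e) + (∑ e ∈ R, G.upperWeight (ε₁ - ε') e)
        = 2 * ∑ e ∈ R, G.upperWeight (ε₁ / 2) e := by
    intro R
    rw [← Finset.sum_add_distrib, Finset.mul_sum]
    apply Finset.sum_congr rfl
    intro e _
    have := upperWeight_affine G e ε' (ε₁ - ε')
    rwa [show (ε' + (ε₁ - ε')) / 2 = ε₁ / 2 by ring] at this
  have hA := (hmst ε' hε1 (by linarith)).2 S hS
  have hB := (hmst (ε₁ - ε') (by linarith) (by linarith)).2 S hS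
  have hS1 := hsumaff S
  have hT1 := hsumaff T
  have hkey : ∑ e ∈ S, G.upperWeight ε' e = ∑ e ∈ T, G.upperWeight ε' e := by linarith
  rw [hkey]
  exact (hmst ε' hε1 (by linarith)).2 S' hS'

end UncGraph

lemma restrict_spanning_iff (G : UncGraph) (w : G.E → ℝ) (Q : Finset G.E)
    (S : Finset G.E) : (G.restrict w Q).IsSpanningTree S ↔ G.IsSpanningTree S :=
  Iff.rfl

lemma restrict_lowerWeight_mem (G : UncGraph) (w : G.E → ℝ) (Q : Finset G.E)
    {e : G.E} (he : e ∈ Q) (ε : ℝ) : (G.restrict w Q).lowerWeight ε e = w e := by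
  simp [UncGraph.restrict, UncGraph.lowerWeight, he]

lemma restrict_lowerWeight_not_mem (G : UncGraph) (w : G.E → ℝ) (Q : Finset G.E)
    {e : G.E} (he : e ∉ Q) (ε : ℝ) :
    (G.restrict w Q).lowerWeight ε e = G.lowerWeight ε e := by
  simp [UncGraph.restrict, UncGraph.lowerWeight, he]

lemma restrict_upperWeight_mem (G : UncGraph) (w : G.E → ℝ) (Q : Finset G.E)
    {e : G.E} (he : e ∈ Q) (ε : ℝ) : (G.restrict w Q).upperWeight ε e = w e := by
  simp [UncGraph.restrict, UncGraph.upperWeight, he]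

lemma restrict_upperWeight_not_mem (G : UncGraph) (w : G.E → ℝ) (Q : Finset G.E)
    {e : G.E} (he : e ∉ Q) (ε : ℝ) :
    (G.restrict w Q).upperWeight ε e = G.upperWeight ε e := by
  simp [UncGraph.restrict, UncGraph.upperWeight, he]

/-- if `G` has unique limit trees `T_L = T_U = T` and the
instance `G'` obtained by querying `Q` has unique limit trees `T_L' = T_U' = T'`,
then every edge of the symmetric difference `T Δ T'` lies in `Q`. -/
theorem limit_tree_change_implies_queried
    (G : UncGraph) (w : G.E → ℝ) (hw : G.Valid w)
    (Q : Finset G.E) (T T' : Finset G.E)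
    (hT : G.UniqueLimitTrees T)
    (hT' : (G.restrict w Q).UniqueLimitTrees T') :
    ∀ e ∈ (T \ T') ∪ (T' \ T), e ∈ Q := by
  classical
  obtain ⟨⟨ε₁, hε₁, hmst₁⟩, ⟨ε₂, hε₂, hmst₂⟩, hLuniq, hUuniq⟩ := hT
  obtain ⟨⟨ε₃, hε₃, hmst₃⟩, ⟨ε₄, hε₄, hmst₄⟩, hLuniq', hUuniq'⟩ := hT'
  -- the gap bound
  set D : Finset ℝ := insert 1 ((Finset.univ : Finset G.E).image fun e =>
    if G.L e < G.U e then min (w e - G.L e) (G.U e - w e) else 1) with hD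
  have hDne : D.Nonempty := ⟨1, Finset.mem_insert_self _ _⟩
  set δ : ℝ := D.min' hDne with hδ
  have hδpos : 0 < δ := by
    rw [hδ]
    apply (Finset.lt_min'_iff D hDne).mpr
    intro y hy
    rcases Finset.mem_insert.mp hy with rfl | hy
    · norm_num
    · obtain ⟨e, _, rfl⟩ := Finset.mem_image.mp hy
      split
      · next hLU =>
        rcases hw e with ⟨h1, _⟩ | ⟨h1, h2⟩
        · exact absurd h1 (ne_of_lt hLU)
        · exact lt_min (by linarith) (by linarith)
      · norm_num
  have hδle : ∀ e : G.E, G.L e < G.U e → δ ≤ w e - G.L e ∧ δ ≤ G.U e - w e := by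
    intro e he
    have hmem : (if G.L e < G.U e then min (w e - G.L e) (G.U e - w e) else 1) ∈ D :=
      Finset.mem_insert_of_mem (Finset.mem_image_of_mem _ (Finset.mem_univ e))
    rw [if_pos he] at hmem
    have := Finset.min'_le D _ hmem
    exact ⟨le_trans this (min_le_left _ _), le_trans this (min_le_right _ _)⟩
  set η : ℝ := min δ (min ε₁ (min ε₂ (min ε₃ ε₄))) with hη
  have hηpos : 0 < η := by
    apply lt_min hδpos
    apply lt_min hε₁
    apply lt_min hε₂
    exact lt_min hε₃ hε₄
  have hηδ : η ≤ δ := min_le_left _ _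
  have hη1 : η ≤ ε₁ := le_trans (min_le_right _ _) (min_le_left _ _)
  have hη2 : η ≤ ε₂ := le_trans (min_le_right _ _) (le_trans (min_le_right _ _) (min_le_left _ _))
  have hη3 : η ≤ ε₃ := le_trans (min_le_right _ _)
    (le_trans (min_le_right _ _) (le_trans (min_le_right _ _) (min_le_left _ _)))
  have hη4 : η ≤ ε₄ := le_trans (min_le_right _ _)
    (le_trans (min_le_right _ _) (le_trans (min_le_right _ _) (min_le_right _ _)))
  -- basic spanning facts
  have hTspan : G.IsSpanningTree T := (hmst₁ (η / 2) (by linarith) (by linarith)).1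
  have hT'span : G.IsSpanningTree T' :=
    (restrict_spanning_iff G w Q T').mp (hmst₃ (η / 2) (by linarith) (by linarith)).1
  -- lower weight bounds vs true weights
  have hlw_le : ∀ e : G.E, G.lowerWeight (η / 2) e ≤ w e := by
    intro e
    unfold UncGraph.lowerWeight
    split
    · next hLU =>
      rcases hw e with ⟨_, h2⟩ | ⟨h1, h2⟩
      · linarith
      · linarith
    · next hLU =>
      have hlt : G.L e < G.U e := lt_of_le_of_ne (G.LU e) hLU
      have := (hδle e hlt).1
      linarith
  have hup_ge : ∀ e : G.E, w e ≤ G.upperWeight (η / 2) e := by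
    intro e
    unfold UncGraph.upperWeight
    split
    · next hLU =>
      rcases hw e with ⟨_, h2⟩ | ⟨h1, h2⟩
      · linarith
      · linarith
    · next hLU =>
      have hlt : G.L e < G.U e := lt_of_le_of_ne (G.LU e) hLU
      have := (hδle e hlt).2
      linarith
  intro e he
  by_contra heQ
  rcases Finset.mem_union.mp he with he' | he'
  · -- e ∈ T \ T'
    obtain ⟨heT, heT'⟩ := Finset.mem_sdiff.mp he'
    obtain ⟨e'', h''B, h''A, hsp2, hsp3⟩ := UncGraph.exchange hTspan hT'span heT heT'
    -- strict inequality in G with lower weights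
    have hne2 : insert e'' (T.erase e) ≠ T := by
      intro hEq
      exact h''A (hEq ▸ Finset.mem_insert_self _ _)
    have hlt1 := UncGraph.strict_lower G hmst₁ hLuniq hsp2 hne2 hηpos hη1
    have hsum2 : ∑ x ∈ insert e'' (T.erase e), G.lowerWeight (η / 2) x
        = G.lowerWeight (η / 2) e'' + (∑ x ∈ T.erase e, G.lowerWeight (η / 2) x) :=
      Finset.sum_insert (fun h => h''A (Finset.mem_of_mem_erase h))
    have hsum2' : G.lowerWeight (η / 2) e + ∑ x ∈ T.erase e, G.lowerWeight (η / 2) x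
        = ∑ x ∈ T, G.lowerWeight (η / 2) x := Finset.add_sum_erase _ _ heT
    have hfe : G.lowerWeight (η / 2) e < G.lowerWeight (η / 2) e'' := by
      rw [hsum2] at hlt1
      linarith
    -- strict inequality in G' with lower weights
    set T3 : Finset G.E := insert e (T'.erase e'') with hT3
    have hne3 : T3 ≠ T' := by
      intro hEq
      exact heT' (hEq ▸ Finset.mem_insert_self _ _)
    have hsp3' : (G.restrict w Q).IsSpanningTree T3 := hsp3
    have hlt2 := UncGraph.strict_lower (G.restrict w Q) hmst₃ hLuniq' hsp3' hne3 hηpos hη3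
    have hsum3 : ∑ x ∈ T3, (G.restrict w Q).lowerWeight (η / 2) x
        = (G.restrict w Q).lowerWeight (η / 2) e
          + ∑ x ∈ T'.erase e'', (G.restrict w Q).lowerWeight (η / 2) x := by
      rw [hT3]
      exact Finset.sum_insert (fun h => heT' (Finset.mem_of_mem_erase h))
    have hsum3' : (G.restrict w Q).lowerWeight (η / 2) e''
          + ∑ x ∈ T'.erase e'', (G.restrict w Q).lowerWeight (η / 2) x
        = ∑ x ∈ T', (G.restrict w Q).lowerWeight (η / 2) x := Finset.add_sum_erase _ _ h''B
    have hlt2' : (∑ x ∈ T', (G.restrict w Q).lowerWeight (η / 2) x)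
        < ∑ x ∈ T3, (G.restrict w Q).lowerWeight (η / 2) x := hlt2
    have hfe' : (G.restrict w Q).lowerWeight (η / 2) e''
        < (G.restrict w Q).lowerWeight (η / 2) e := by
      rw [hsum3] at hlt2'
      linarith
    rw [restrict_lowerWeight_not_mem G w Q heQ] at hfe'
    by_cases h''Q : e'' ∈ Q
    · rw [restrict_lowerWeight_mem G w Q h''Q] at hfe'
      have := hlw_le e''
      linarith
    · rw [restrict_lowerWeight_not_mem G w Q h''Q] at hfe'
      linarith
  · -- e ∈ T' \ T
    obtain ⟨heT', heT⟩ := Finset.mem_sdiff.mp he'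
    obtain ⟨e'', h''B, h''A, hsp2, hsp3⟩ := UncGraph.exchange hT'span hTspan heT' heT
    -- e'' ∈ T, e'' ∉ T', insert e'' (T'.erase e) spanning, insert e (T.erase e'') spanning
    set T2 : Finset G.E := insert e'' (T'.erase e) with hT2
    have hne2 : T2 ≠ T' := by
      intro hEq
      exact h''A (hEq ▸ Finset.mem_insert_self _ _)
    have hsp2' : (G.restrict w Q).IsSpanningTree T2 := hsp2
    have hlt1 := UncGraph.strict_upper (G.restrict w Q) hmst₄ hUuniq' hsp2' hne2 hηpos hη4
    have hsum2 : ∑ x ∈ T2, (G.restrict w Q).upperWeight (η / 2) x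
        = (G.restrict w Q).upperWeight (η / 2) e''
          + ∑ x ∈ T'.erase e, (G.restrict w Q).upperWeight (η / 2) x := by
      rw [hT2]
      exact Finset.sum_insert (fun h => h''A (Finset.mem_of_mem_erase h))
    have hsum2' : (G.restrict w Q).upperWeight (η / 2) e
          + ∑ x ∈ T'.erase e, (G.restrict w Q).upperWeight (η / 2) x
        = ∑ x ∈ T', (G.restrict w Q).upperWeight (η / 2) x := Finset.add_sum_erase _ _ heT'
    have hlt1' : (∑ x ∈ T', (G.restrict w Q).upperWeight (η / 2) x)
        < ∑ x ∈ T2, (G.restrict w Q).upperWeight (η / 2) x := hlt1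
    have hge : (G.restrict w Q).upperWeight (η / 2) e
        < (G.restrict w Q).upperWeight (η / 2) e'' := by
      rw [hsum2] at hlt1'
      linarith
    have hne3 : insert e (T.erase e'') ≠ T := by
      intro hEq
      exact heT (hEq ▸ Finset.mem_insert_self _ _)
    have hlt2 := UncGraph.strict_upper G hmst₂ hUuniq hsp3 hne3 hηpos hη2
    have hsum3 : ∑ x ∈ insert e (T.erase e''), G.upperWeight (η / 2) x
        = G.upperWeight (η / 2) e + ∑ x ∈ T.erase e'', G.upperWeight (η / 2) x :=
      Finset.sum_insert (fun h => heT (Finset.mem_of_mem_erase h))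
    have hsum3' : G.upperWeight (η / 2) e''
          + ∑ x ∈ T.erase e'', G.upperWeight (η / 2) x
        = ∑ x ∈ T, G.upperWeight (η / 2) x := Finset.add_sum_erase _ _ h''B
    have hge' : G.upperWeight (η / 2) e'' < G.upperWeight (η / 2) e := by
      rw [hsum3] at hlt2
      linarith
    rw [restrict_upperWeight_not_mem G w Q heQ] at hge
    by_cases h''Q : e'' ∈ Q
    · rw [restrict_upperWeight_mem G w Q h''Q] at hge
      have := hup_ge e''
      linarith
    · rw [restrict_upperWeight_not_mem G w Q h''Q] at hge
      linarith
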